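/- Fix constants n̄ > 0, ḡ > 0, ħ > 0, κ̄ > 0, τ_p > 0, τ_w > 0. For ξ ∈ ℝ³ with ξ ≠ 0, set ω = ξ/|ξ| and define the 5×5 real matrices A(ξ) and B(ξ) by: A(ξ) = [[0, n̄ωᵀ, 0], [((2/3)ḡ + (ħ²/18)|ξ|²) ω, 0₃, (2n̄/3) ω], [0, (2n̄ḡ/3) ωᵀ, 0]] (block structure with scalar first and last components and a 3-vector middle component), and B(ξ) the matrix whose only nonzero entries are B(ξ)_{22} = B(ξ)_{33} = B(ξ)_{44} = n̄/τ_p, B(ξ)_{55} = n̄/τ_w + (2/3)κ̄|ξ|², and B(ξ)_{51} = −(ħ²κ̄/(36 n̄))|ξ|⁴. Then there is no family {S(ξ)}_{ξ ∈ ℝ³∖{0}} of real symmetric positive definite 5×5 matrices such that S(ξ)A(ξ) and S(ξ)B(ξ) are symmetric for every ξ ≠ 0. In particular, the linearized full quantum hydrodynamics system with energy exchanges is not symbol symmetrizable. -/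

import Mathlib

open Matrix

/-- The linearized full quantum hydrodynamics system with energy
exchanges is not symbol symmetrizable: there is no family `S(ξ)` of real symmetric
positive definite `5 × 5` matrices such that `S(ξ)A(ξ)` and `S(ξ)B(ξ)` are symmetric
for all `ξ ≠ 0`, where `A(ξ)` and `B(ξ)` are the generalized transport and dissipation
symbols of the system. -/
theorem fullQHD_not_symbol_symmetrizable (n g h κ τp τw : ℝ)
    (hn : 0 < n) (hg : 0 < g) (hh : 0 < h) (hκ : 0 < κ) (hτp : 0 < τp) (hτw : 0 < τw) :
    let nξ2 : (Fin 3 → ℝ) → ℝ := fun ξ => ξ 0 ^ 2 + ξ 1 ^ 2 + ξ 2 ^ 2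
    let ω : (Fin 3 → ℝ) → Fin 3 → ℝ := fun ξ i => ξ i / Real.sqrt (nξ2 ξ)
    let H : (Fin 3 → ℝ) → ℝ := fun ξ => (2 / 3) * g + (h ^ 2 / 18) * nξ2 ξ
    let A : (Fin 3 → ℝ) → Matrix (Fin 5) (Fin 5) ℝ := fun ξ =>
      !![0, n * ω ξ 0, n * ω ξ 1, n * ω ξ 2, 0;
         H ξ * ω ξ 0, 0, 0, 0, (2 * n / 3) * ω ξ 0;
         H ξ * ω ξ 1, 0, 0, 0, (2 * n / 3) * ω ξ 1;
         H ξ * ω ξ 2, 0, 0, 0, (2 * n / 3) * ω ξ 2;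
         0, (2 * n * g / 3) * ω ξ 0, (2 * n * g / 3) * ω ξ 1, (2 * n * g / 3) * ω ξ 2, 0]
    let B : (Fin 3 → ℝ) → Matrix (Fin 5) (Fin 5) ℝ := fun ξ =>
      !![0, 0, 0, 0, 0;
         0, n / τp, 0, 0, 0;
         0, 0, n / τp, 0, 0;
         0, 0, 0, n / τp, 0;
         -((h ^ 2 * κ / (36 * n)) * nξ2 ξ ^ 2), 0, 0, 0, n / τw + (2 / 3) * κ * nξ2 ξ]
    ¬ ∃ S : (Fin 3 → ℝ) → Matrix (Fin 5) (Fin 5) ℝ,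
        ∀ ξ : Fin 3 → ℝ, ξ ≠ 0 →
          (S ξ).PosDef ∧ (S ξ * A ξ).IsSymm ∧ (S ξ * B ξ).IsSymm := by
  intro nξ2 ω H A B
  rintro ⟨S, hS⟩
  -- choose a large frequency
  obtain ⟨T, hTdef⟩ : ∃ x : ℝ,
      x = 1 + (24 * n * (n / τw) * g + 16 * n * g * κ) / (h ^ 2 * κ) := ⟨_, rfl⟩
  have hden : 0 < h ^ 2 * κ := by positivity
  have hT1 : 1 ≤ T := by
    have hX : 0 ≤ (24 * n * (n / τw) * g + 16 * n * g * κ) / (h ^ 2 * κ) := by positivity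
    rw [hTdef]; linarith
  have hTpos : 0 < T := by linarith
  obtain ⟨t, htdef⟩ : ∃ x : ℝ, x = Real.sqrt T := ⟨_, rfl⟩
  have htpos : 0 < t := htdef ▸ Real.sqrt_pos.mpr hTpos
  have ht2 : t ^ 2 = T := by rw [htdef]; exact Real.sq_sqrt hTpos.le
  obtain ⟨ξ, hξdef⟩ : ∃ v : Fin 3 → ℝ, v = ![t, 0, 0] := ⟨_, rfl⟩
  have hξ0 : ξ 0 = t := by rw [hξdef]; rfl
  have hξ1 : ξ 1 = 0 := by rw [hξdef]; rfl
  have hξ2 : ξ 2 = 0 := by rw [hξdef]; rfl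
  have hξ : ξ ≠ 0 := by
    intro hc
    have := congrFun hc 0
    rw [hξ0] at this
    exact htpos.ne' (by simpa using this)
  obtain ⟨hpos, hSA, hSB⟩ := hS ξ hξ
  have hn2 : nξ2 ξ = t ^ 2 := by simp [nξ2, hξ0, hξ1, hξ2]
  have hsq : Real.sqrt (nξ2 ξ) = t := by rw [hn2, Real.sqrt_sq htpos.le]
  have hω0 : ω ξ 0 = 1 := by
    simp only [ω, hsq, hξ0]
    exact div_self htpos.ne'
  have hω1 : ω ξ 1 = 0 := by
    simp only [ω, hsq, hξ1]
    simp
  have hω2 : ω ξ 2 = 0 := by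
    simp only [ω, hsq, hξ2]
    simp
  -- symmetry of S
  have h40 : S ξ 4 0 = S ξ 0 4 := by
    have h2 := congrFun (congrFun hpos.1 0) 4
    simpa [Matrix.conjTranspose_apply] using h2
  -- positive diagonal entries
  have hdiag : ∀ i : Fin 5, 0 < S ξ i i := by
    intro i
    have := hpos.dotProduct_mulVec_pos (x := Pi.single i 1) (by
      intro hc
      simpa using congrFun hc i)
    simpa [dotProduct, mulVec, Pi.single_apply, Finset.sum_ite_eq] using this
  -- abbreviations
  obtain ⟨c, hcdef⟩ : ∃ x : ℝ, x = h ^ 2 * κ / (36 * n) * T ^ 2 := ⟨_, rfl⟩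
  obtain ⟨d, hddef⟩ : ∃ x : ℝ, x = n / τw + 2 / 3 * κ * T := ⟨_, rfl⟩
  have hdpos : 0 < d := by rw [hddef]; positivity
  -- symmetry of S * B at (0,4)/(4,0)
  have eB : S ξ 0 4 * d = S ξ 4 4 * (-c) := by
    have h1 : (S ξ * B ξ) 0 4 = S ξ 0 4 * d := by
      rw [hddef]
      simp [B, Matrix.mul_apply, Fin.sum_univ_five, hn2, ht2]
    have h2 : (S ξ * B ξ) 4 0 = S ξ 4 4 * (-c) := by
      rw [hcdef]
      simp [B, Matrix.mul_apply, Fin.sum_univ_five, hn2, ht2]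
      try ring
    have := hSB.apply 4 0
    rw [h1, h2] at this
    linarith
  -- symmetry of S * A at (4,1)/(1,4)
  have eA : S ξ 0 4 * n + S ξ 4 4 * (2 * n * g / 3) = S ξ 1 1 * (2 * n / 3) := by
    have h1 : (S ξ * A ξ) 4 1 = S ξ 4 0 * n + S ξ 4 4 * (2 * n * g / 3) := by
      simp [A, Matrix.mul_apply, Fin.sum_univ_five, Matrix.vecHead, Matrix.vecTail,
        hω0, hω1, hω2]
      try ring
    have h2 : (S ξ * A ξ) 1 4 = S ξ 1 1 * (2 * n / 3) := by
      simp [A, Matrix.mul_apply, Fin.sum_univ_five, Matrix.vecHead, Matrix.vecTail,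
        hω0, hω1, hω2]
      try ring
    have := hSA.apply 4 1
    rw [h1, h2] at this
    rw [h40] at this
    linarith
  -- key size estimate: c ≥ (2 g / 3) * d
  have hkey : 2 * g / 3 * d ≤ c := by
    have hu : 0 ≤ n / τw := by positivity
    have hTeq : h ^ 2 * κ * (T - 1) = 24 * n * (n / τw) * g + 16 * n * g * κ := by
      rw [hTdef]
      field_simp
      try ring
    have hTeq2 : h ^ 2 * κ * (T - 1) * T = (24 * n * (n / τw) * g + 16 * n * g * κ) * T := by
      rw [hTeq]
    have h36 : (0:ℝ) < 36 * n := by positivity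
    have hcore : 24 * n * g * (n / τw) + 16 * n * g * κ * T ≤ h ^ 2 * κ * T ^ 2 := by
      nlinarith [hTeq2, mul_pos hden hTpos,
        mul_nonneg (mul_nonneg (mul_nonneg (by norm_num : (0:ℝ) ≤ 24) hn.le) hu)
          (mul_nonneg hg.le (sub_nonneg.mpr hT1))]
    calc 2 * g / 3 * d = (24 * n * g * (n / τw) + 16 * n * g * κ * T) / (36 * n) := by
          rw [hddef]; field_simp; ring
      _ ≤ h ^ 2 * κ * T ^ 2 / (36 * n) := by
          exact div_le_div_of_nonneg_right hcore h36.le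
      _ = c := by rw [hcdef]; ring
  -- combine everything into a contradiction
  have e2 : S ξ 0 4 * n * d + S ξ 4 4 * (2 * n * g / 3) * d = S ξ 1 1 * (2 * n / 3) * d := by
    linear_combination eA * d
  have e3 : S ξ 0 4 * n * d = S ξ 4 4 * (-c) * n := by
    linear_combination n * eB
  have e4 : S ξ 1 1 * (2 * n / 3) * d = S ξ 4 4 * n * (2 * g / 3 * d - c) := by
    linear_combination -e2 + e3
  have hle : S ξ 4 4 * n * (2 * g / 3 * d - c) ≤ 0 :=
    mul_nonpos_of_nonneg_of_nonpos (mul_nonneg (hdiag 4).le hn.le) (by linarith)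
  have hgt : 0 < S ξ 1 1 * (2 * n / 3) * d :=
    mul_pos (mul_pos (hdiag 1) (by linarith)) hdpos
  rw [e4] at hgt
  linarith
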